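/- In the setting of the block Lyapunov decomposition with A₁ = A_α − BF_α, A₂ = A_α − K_αC, A₁₂ = −BF_α, Q₁₁ = Q + F_αᵀRF_α, Q₁₂ = F_αᵀRF_α, Q₂₂ = F_αᵀRF_α: if F_α = R⁻¹BᵀX_α where X_α is symmetric and solves A_αᵀX_α + X_αA_α + Q − X_αBR⁻¹BᵀX_α = 0, and A₁, A₂ are Hurwitz, then the unique solution of the joint Lyapunov equation has X̃₁₁ = X_α and X̃₁₂ = 0. -/

import Mathlib

open Matrix MeasureTheory Set

attribute [local instance] Matrix.normedAddCommGroup Matrix.normedSpace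

/-- Matrix exponential over the reals. -/
noncomputable def mexp {n : Type*} [Fintype n] [DecidableEq n] (A : Matrix n n ℝ) :
    Matrix n n ℝ :=
  NormedSpace.exp A

/-- A real square matrix is Hurwitz if all its complex eigenvalues have negative real part. -/
def IsHurwitz {n : Type*} [Fintype n] [DecidableEq n] (A : Matrix n n ℝ) : Prop :=
  ∀ μ ∈ spectrum ℂ (A.map (algebraMap ℝ ℂ)), μ.re < 0

section Helpers
open Polynomial



variable {n k : Type*} [Fintype n] [Fintype k] [DecidableEq n] [DecidableEq k]

/-- root of charpoly belongs to spectrum (over a field). -/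
lemma root_charpoly_mem_spectrum {K : Type*} [Field K] (M : Matrix n n K) {r : K}
    (h : M.charpoly.IsRoot r) : r ∈ spectrum K M := by
  rw [spectrum.mem_iff]
  rw [Matrix.isUnit_iff_isUnit_det]
  have hdet : (algebraMap K (Matrix n n K) r - M).det = M.charpoly.eval r := by
    have hmap : (Matrix.charmatrix M).map (Polynomial.evalRingHom r)
        = algebraMap K (Matrix n n K) r - M := by
      ext i j
      by_cases hij : i = j <;>
        simp [hij, Matrix.charmatrix_apply, Matrix.algebraMap_eq_diagonal,
          Matrix.diagonal_apply, Matrix.sub_apply]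
    rw [← hmap]
    exact ((RingHom.map_det (Polynomial.evalRingHom r) M.charmatrix)).symm
  rw [hdet, h]
  exact not_isUnit_zero

lemma aeval_intertwine {K : Type*} [Field K] (A : Matrix n n K) (B : Matrix k k K)
    (X : Matrix n k K) (h : A * X = X * B) (q : K[X]) :
    (aeval A q) * X = X * (aeval B q) := by
  induction q using Polynomial.induction_on' with
  | add p r hp hr => rw [map_add, map_add, Matrix.add_mul, Matrix.mul_add, hp, hr]
  | monomial i a =>
      simp only [aeval_monomial]
      have hpow : ∀ i : ℕ, A ^ i * X = X * B ^ i := by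
        intro i
        induction i with
        | zero => simp
        | succ j hj =>
            rw [pow_succ, pow_succ, Matrix.mul_assoc, h, ← Matrix.mul_assoc, hj,
              Matrix.mul_assoc]
      simp [Algebra.algebraMap_eq_smul_one, smul_mul_assoc, mul_smul_comm,
        Matrix.mul_assoc, hpow]

/-- Sylvester-type uniqueness: if spectra of `A` and `-B` are disjoint (algebraically
closed field), then `A * X = X * B` forces `X = 0`. -/
lemma sylvester_eq_zero (A : Matrix n n ℂ) (B : Matrix k k ℂ) (X : Matrix n k ℂ)
    (h : A * X = X * B)
    (hdisj : ∀ μ ∈ spectrum ℂ B, μ ∉ spectrum ℂ A) : X = 0 := by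
  set q := B.charpoly with hq
  have h1 : (aeval A q) * X = 0 := by
    rw [aeval_intertwine A B X h q, Matrix.aeval_self_charpoly, Matrix.mul_zero]
  have hmon : q.Monic := B.charpoly_monic
  have hsplit : q = (q.roots.map fun r => Polynomial.X - Polynomial.C r).prod :=
    (IsAlgClosed.splits q).eq_prod_roots_of_monic hmon
  -- show aeval A q is a unit
  have hunit : IsUnit (aeval A q) := by
    rw [hsplit]
    have : ∀ s : Multiset ℂ, (∀ r ∈ s, r ∈ spectrum ℂ B) →
        IsUnit (aeval A (s.map fun r => Polynomial.X - Polynomial.C r).prod) := by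
      intro s
      induction s using Multiset.induction_on with
      | empty => intro _; simp
      | cons r s ih =>
          intro hs
          rw [Multiset.map_cons, Multiset.prod_cons, _root_.map_mul]
          refine (IsUnit.mul ?_ (ih fun x hx => hs x (Multiset.mem_cons_of_mem hx)))
          have hr : r ∈ spectrum ℂ B := hs r (Multiset.mem_cons_self r s)
          have hnA : r ∉ spectrum ℂ A := hdisj r hr
          rw [spectrum.mem_iff, not_not] at hnA
          simpa [map_sub, aeval_X, aeval_C, neg_sub] using hnA.neg
    refine this q.roots fun r hr => root_charpoly_mem_spectrum B ?_
    exact isRoot_of_mem_roots hr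
  obtain ⟨u, hu⟩ := hunit
  calc X = (↑u⁻¹ * aeval A q) * X := by rw [← hu, Units.inv_mul, Matrix.one_mul]
  _ = (↑u⁻¹ : Matrix n n ℂ) * ((aeval A q) * X) := by rw [Matrix.mul_assoc]
  _ = 0 := by rw [h1, Matrix.mul_zero]




lemma mem_spectrum_transpose_iff (M : Matrix n n ℂ) (μ : ℂ) :
    μ ∈ spectrum ℂ Mᵀ ↔ μ ∈ spectrum ℂ M := by
  simp only [spectrum.mem_iff]
  have h : algebraMap ℂ (Matrix n n ℂ) μ - Mᵀ = (algebraMap ℂ (Matrix n n ℂ) μ - M)ᵀ := by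
    rw [Matrix.transpose_sub]
    congr 1
    rw [Matrix.algebraMap_eq_diagonal, Matrix.diagonal_transpose]
  rw [h, Matrix.isUnit_transpose]

lemma mem_spectrum_neg_iff (M : Matrix n n ℂ) (μ : ℂ) :
    μ ∈ spectrum ℂ (-M) ↔ -μ ∈ spectrum ℂ M := by
  simp only [spectrum.mem_iff]
  have h : algebraMap ℂ (Matrix n n ℂ) μ - -M
      = -(algebraMap ℂ (Matrix n n ℂ) (-μ) - M) := by
    rw [map_neg]; abel
  rw [h, IsUnit.neg_iff]

lemma hurwitz_sylvester_zero (A₁ A₂ X : Matrix n n ℝ)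
    (h1 : IsHurwitz A₁) (h2 : IsHurwitz A₂)
    (h : A₁ᵀ * X + X * A₂ = 0) : X = 0 := by
  have hmm : A₁ᵀ * X = X * (-A₂) := by
    rw [Matrix.mul_neg]
    exact eq_neg_of_add_eq_zero_left h
  set f := algebraMap ℝ ℂ with hf
  have hC : (A₁.map f)ᵀ * X.map f = X.map f * -(A₂.map f) := by
    have h2' := congrArg (algebraMap ℝ ℂ).mapMatrix hmm
    simpa only [_root_.map_mul, map_neg, RingHom.mapMatrix_apply,
      Matrix.transpose_map, hf] using h2'
  have hX0 : X.map f = 0 := by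
    refine sylvester_eq_zero ((A₁.map f)ᵀ) (-(A₂.map f)) (X.map f) hC ?_
    intro μ hμ hμ'
    rw [mem_spectrum_neg_iff] at hμ
    rw [mem_spectrum_transpose_iff] at hμ'
    have := h1 μ hμ'
    have := h2 (-μ) hμ
    simp only [Complex.neg_re] at this
    linarith
  have : X.map f = (0 : Matrix n n ℝ).map f := by
    rw [hX0]; ext i j; simp
  exact Matrix.map_injective (RingHom.injective f) this

end Helpers

theorem stmt7 {n m p : Type*} [Fintype n] [Fintype m] [Fintype p]
    [DecidableEq n] [DecidableEq m] [DecidableEq p]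
    (A Q Xα : Matrix n n ℝ) (B : Matrix n m ℝ) (C : Matrix p n ℝ)
    (R : Matrix m m ℝ) (Fα : Matrix m n ℝ) (Kα : Matrix n p ℝ) (α : ℝ)
    (hQ : Q.PosSemidef) (hR : R.PosDef) (hXα : Xα.IsSymm)
    (hF : Fα = R⁻¹ * Bᵀ * Xα)
    (hric : (A + α • (1 : Matrix n n ℝ))ᵀ * Xα + Xα * (A + α • (1 : Matrix n n ℝ)) + Q
        - Xα * B * R⁻¹ * Bᵀ * Xα = 0)
    (hA₁ : IsHurwitz (A + α • (1 : Matrix n n ℝ) - B * Fα))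
    (hA₂ : IsHurwitz (A + α • (1 : Matrix n n ℝ) - Kα * C))
    (X₁₁ X₁₂ X₂₁ X₂₂ : Matrix n n ℝ)
    (hLyap : (fromBlocks (A + α • (1 : Matrix n n ℝ) - B * Fα) (-(B * Fα)) 0
          (A + α • (1 : Matrix n n ℝ) - Kα * C))ᵀ * fromBlocks X₁₁ X₁₂ X₂₁ X₂₂
        + fromBlocks X₁₁ X₁₂ X₂₁ X₂₂ * fromBlocks (A + α • (1 : Matrix n n ℝ) - B * Fα)
          (-(B * Fα)) 0 (A + α • (1 : Matrix n n ℝ) - Kα * C)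
        + fromBlocks (Q + Fαᵀ * R * Fα) (Fαᵀ * R * Fα) (Fαᵀ * R * Fα) (Fαᵀ * R * Fα) = 0) :
    X₁₁ = Xα ∧ X₁₂ = 0 := by
  set Aα := A + α • (1 : Matrix n n ℝ) with hAα
  set A₁ := Aα - B * Fα with hA1
  set A₂ := Aα - Kα * C with hA2
  rw [Matrix.fromBlocks_transpose, Matrix.fromBlocks_multiply,
    Matrix.fromBlocks_multiply, Matrix.fromBlocks_add, Matrix.fromBlocks_add] at hLyap
  have h11 := congrArg Matrix.toBlocks₁₁ hLyap
  have h12 := congrArg Matrix.toBlocks₁₂ hLyap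
  simp only [Matrix.toBlocks_fromBlocks₁₁, Matrix.toBlocks_fromBlocks₁₂] at h11 h12
  have hz : (Matrix.toBlocks₁₁ (0 : Matrix (n ⊕ n) (n ⊕ n) ℝ)) = 0 := rfl
  have hz' : (Matrix.toBlocks₁₂ (0 : Matrix (n ⊕ n) (n ⊕ n) ℝ)) = 0 := rfl
  rw [hz] at h11
  rw [hz'] at h12
  -- basic facts about R
  have hRdet : IsUnit R.det := isUnit_iff_ne_zero.mpr (ne_of_gt hR.det_pos)
  have hRT : Rᵀ = R := hR.1
  have hRinvT : (R⁻¹)ᵀ = R⁻¹ := by rw [Matrix.transpose_nonsing_inv, hRT]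
  have hFt : Fαᵀ = Xα * (B * R⁻¹) := by
    rw [hF, Matrix.transpose_mul, Matrix.transpose_mul, Matrix.transpose_transpose,
      hRinvT, hXα.eq]
  have hRF : R * Fα = Bᵀ * Xα := by
    rw [hF, ← Matrix.mul_assoc, ← Matrix.mul_assoc, Matrix.mul_nonsing_inv _ hRdet,
      Matrix.one_mul]
  simp only [Matrix.mul_assoc] at hric
  set s : Matrix n n ℝ := Xα * (B * (R⁻¹ * (Bᵀ * Xα))) with hs
  have hS1 : Fαᵀ * (Bᵀ * Xα) = s := by rw [hFt, hs, Matrix.mul_assoc, Matrix.mul_assoc]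
  have hS2 : Xα * (B * Fα) = s := by rw [hF, hs]; simp only [Matrix.mul_assoc]
  have hS3 : Fαᵀ * (R * Fα) = s := by rw [hRF, hS1]
  -- Xα satisfies the (1,1) Lyapunov equation
  have hXL : A₁ᵀ * Xα + Xα * A₁ + (Q + Fαᵀ * (R * Fα)) = 0 := by
    simp only [hA1, Matrix.transpose_sub, Matrix.transpose_mul, Matrix.sub_mul,
      Matrix.mul_sub, Matrix.mul_assoc, hS1, hS2, hS3]
    rw [← hric]
    abel
  have hEq11 : A₁ᵀ * X₁₁ + X₁₁ * A₁ + (Q + Fαᵀ * (R * Fα)) = 0 := by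
    simpa only [Matrix.transpose_zero, Matrix.zero_mul, Matrix.mul_zero, add_zero,
      Matrix.mul_assoc] using h11
  have hD : A₁ᵀ * (X₁₁ - Xα) + (X₁₁ - Xα) * A₁ = 0 := by
    have hrw : A₁ᵀ * (X₁₁ - Xα) + (X₁₁ - Xα) * A₁
        = (A₁ᵀ * X₁₁ + X₁₁ * A₁ + (Q + Fαᵀ * (R * Fα)))
          - (A₁ᵀ * Xα + Xα * A₁ + (Q + Fαᵀ * (R * Fα))) := by
      rw [Matrix.mul_sub, Matrix.sub_mul]; abel
    rw [hrw, hEq11, hXL, sub_zero]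
  have hX11 : X₁₁ = Xα :=
    sub_eq_zero.mp (hurwitz_sylvester_zero A₁ A₁ _ hA₁ hA₁ hD)
  refine ⟨hX11, ?_⟩
  have h12' : A₁ᵀ * X₁₂ + (-s + X₁₂ * A₂) + s = 0 := by
    simpa only [Matrix.transpose_zero, Matrix.zero_mul, Matrix.mul_zero, add_zero,
      Matrix.mul_neg, hX11, Matrix.mul_assoc, hS2, hS3] using h12
  have hEq12 : A₁ᵀ * X₁₂ + X₁₂ * A₂ = 0 := by
    calc A₁ᵀ * X₁₂ + X₁₂ * A₂ = A₁ᵀ * X₁₂ + (-s + X₁₂ * A₂) + s := by abel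
    _ = 0 := h12'
  exact hurwitz_sylvester_zero A₁ A₂ X₁₂ hA₁ hA₂ hEq12
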